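/- Let a > 0, z₀ ∈ C, r > 0, and define I(r, z₀) = ∫_{D_r(z₀)} 4a²/(|z|² + a²)² dz (area integral over the disk of radius r centered at z₀). Then I(r, z₀) = 2π ( 1 + (r² - |z₀|² - a²)/√((a² + (r - |z₀|)²)(a² + (r + |z₀|)²)) ). -/

import Mathlib

open MeasureTheory Real

noncomputable def Gfun (A B θ : ℝ) : ℝ :=
  2*A/((A^2-B^2) * Real.sqrt (A^2-B^2)) * Real.arctan ((A-B)/Real.sqrt (A^2-B^2) * Real.tan (θ/2))
    - B/(A^2-B^2) * (Real.sin θ / (A + B * Real.cos θ))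

lemma hasDerivAt_Gfun (A B : ℝ) (h : |B| < A) (θ : ℝ) (hθ : Real.cos (θ/2) ≠ 0) :
    HasDerivAt (Gfun A B) (1/(A + B * Real.cos θ)^2) θ := by
  have hA : 0 < A := (abs_nonneg B).trans_lt h
  have hD : 0 < A^2 - B^2 := by
    have := sq_lt_sq' (neg_lt_of_abs_lt h) (lt_of_abs_lt h)
    linarith
  set sD := Real.sqrt (A^2 - B^2) with hsD
  have hsD2 : sD^2 = A^2 - B^2 := Real.sq_sqrt hD.le
  have hsDpos : 0 < sD := Real.sqrt_pos.mpr hD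
  have hden : 0 < A + B * Real.cos θ := by
    nlinarith [abs_nonneg B, neg_abs_le (B * Real.cos θ), abs_mul B (Real.cos θ),
      Real.abs_cos_le_one θ, mul_le_mul_of_nonneg_left (Real.abs_cos_le_one θ) (abs_nonneg B)]
  have htan : HasDerivAt (fun x : ℝ => Real.tan (x/2)) (1 / Real.cos (θ/2)^2 * (1/2)) θ := by
    have h1 : HasDerivAt (fun x : ℝ => x/2) (1/2) θ := by
      simpa using (hasDerivAt_id θ).div_const 2
    exact (Real.hasDerivAt_tan hθ).comp θ h1
  have harc : HasDerivAt (fun x : ℝ => Real.arctan ((A-B)/sD * Real.tan (x/2)))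
      (1/(1 + ((A-B)/sD * Real.tan (θ/2))^2) * ((A-B)/sD * (1 / Real.cos (θ/2)^2 * (1/2)))) θ := by
    exact (Real.hasDerivAt_arctan ((A-B)/sD * Real.tan (θ/2))).comp θ (htan.const_mul ((A-B)/sD))
  have hq : HasDerivAt (fun x : ℝ => Real.sin x / (A + B * Real.cos x))
      ((Real.cos θ * (A + B * Real.cos θ) - Real.sin θ * (B * (-Real.sin θ))) / (A + B * Real.cos θ)^2) θ := by
    simpa using (Real.hasDerivAt_sin θ).fun_div
      ((hasDerivAt_const θ A).add ((Real.hasDerivAt_cos θ).const_mul B)) hden.ne'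
  have hc2 : Real.cos θ = 2 * Real.cos (θ/2)^2 - 1 := by
    have h := Real.cos_sq (θ/2); rw [show 2*(θ/2) = θ by ring] at h; linarith
  have hpy : Real.sin (θ/2)^2 = 1 - Real.cos (θ/2)^2 := by
    have := Real.sin_sq_add_cos_sq (θ/2); linarith
  have key1 : (1/(1 + ((A-B)/sD * Real.tan (θ/2))^2) * ((A-B)/sD * (1 / Real.cos (θ/2)^2 * (1/2))))
      = sD/(2*(A + B * Real.cos θ)) := by
    rw [Real.tan_eq_sin_div_cos]
    set c := Real.cos (θ/2)
    set s := Real.sin (θ/2)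
    have h1 : 1 + ((A-B)/sD * (s/c))^2 ≠ 0 := by positivity
    field_simp
    rw [hc2]
    linear_combination (-c^2) * hsD2 + (-(A-B)^2) * hpy
  have hsinsq : Real.sin θ^2 = 1 - Real.cos θ^2 := by
    have := Real.sin_sq_add_cos_sq θ; linarith
  have hcomb := (harc.const_mul (2*A/((A^2-B^2) * sD))).sub (hq.const_mul (B/(A^2-B^2)))
  rw [key1] at hcomb
  unfold Gfun
  refine hcomb.congr_deriv ?_
  field_simp
  linear_combination (-B^2) * hsinsq

lemma cont_den (A B : ℝ) (h : |B| < A) : Continuous (fun θ : ℝ => 1/(A + B * Real.cos θ)^2) := by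
  have hden : ∀ θ : ℝ, 0 < A + B * Real.cos θ := by
    intro θ
    nlinarith [neg_abs_le (B * Real.cos θ), abs_mul B (Real.cos θ),
      mul_le_mul_of_nonneg_left (Real.abs_cos_le_one θ) (abs_nonneg B)]
  exact continuous_const.div (by continuity) (fun θ => pow_ne_zero 2 (hden θ).ne')

lemma ang_int (A B : ℝ) (h : |B| < A) :
    ∫ θ in (-π)..π, 1/(A + B * Real.cos θ)^2
      = 2*π*A/((A^2-B^2) * Real.sqrt (A^2-B^2)) := by
  have hA : 0 < A := (abs_nonneg B).trans_lt h
  have hD : 0 < A^2 - B^2 := by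
    have := sq_lt_sq' (neg_lt_of_abs_lt h) (lt_of_abs_lt h); linarith
  set sD := Real.sqrt (A^2 - B^2) with hsD
  have hsD2 : sD^2 = A^2 - B^2 := Real.sq_sqrt hD.le
  have hsDpos : 0 < sD := Real.sqrt_pos.mpr hD
  have hcontB := cont_den A B h
  have hB' : |(-B)| < A := by rwa [abs_neg]
  have hcontB' := cont_den A (-B) hB'
  have hper : Function.Periodic (fun θ : ℝ => 1/(A + B * Real.cos θ)^2) (2*π) := by
    intro x; simp [Real.cos_add_two_pi]
  -- shift the window
  have h1 : ∫ θ in (-π)..π, 1/(A + B * Real.cos θ)^2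
      = ∫ θ in (-(π/2))..(3*π/2), 1/(A + B * Real.cos θ)^2 := by
    have := hper.intervalIntegral_add_eq (-π) (-(π/2))
    rw [show -π + 2*π = π by ring, show -(π/2) + 2*π = 3*π/2 by ring] at this
    exact this
  -- split
  have h2 : ∫ θ in (-(π/2))..(3*π/2), 1/(A + B * Real.cos θ)^2
      = (∫ θ in (-(π/2))..(π/2), 1/(A + B * Real.cos θ)^2)
        + ∫ θ in (π/2)..(3*π/2), 1/(A + B * Real.cos θ)^2 :=
    (intervalIntegral.integral_add_adjacent_intervals
      (hcontB.intervalIntegrable _ _) (hcontB.intervalIntegrable _ _)).symm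
  -- second piece
  have h3 : ∫ θ in (π/2)..(3*π/2), 1/(A + B * Real.cos θ)^2
      = ∫ θ in (-(π/2))..(π/2), 1/(A + (-B) * Real.cos θ)^2 := by
    have := intervalIntegral.integral_comp_add_right (a := -(π/2)) (b := π/2)
      (fun θ : ℝ => 1/(A + B * Real.cos θ)^2) π
    rw [show -(π/2) + π = π/2 by ring, show π/2 + π = 3*π/2 by ring] at this
    rw [← this]
    apply intervalIntegral.integral_congr
    intro x _
    simp [Real.cos_add_pi]

  have hIcc : ∀ x ∈ Set.uIcc (-(π/2)) (π/2), Real.cos (x/2) ≠ 0 := by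
    intro x hx
    rw [Set.uIcc_of_le (by linarith [Real.pi_pos] : -(π/2) ≤ π/2)] at hx
    have h1 : -(π/2) < x/2 := by nlinarith [hx.1, Real.pi_pos]
    have h2 : x/2 < π/2 := by nlinarith [hx.2, Real.pi_pos]
    exact (Real.cos_pos_of_mem_Ioo ⟨h1, h2⟩).ne'
  have hftcB : ∫ θ in (-(π/2))..(π/2), 1/(A + B * Real.cos θ)^2
      = Gfun A B (π/2) - Gfun A B (-(π/2)) :=
    intervalIntegral.integral_eq_sub_of_hasDerivAt
      (fun x hx => hasDerivAt_Gfun A B h x (hIcc x hx)) (hcontB.intervalIntegrable _ _)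
  have hftcB' : ∫ θ in (-(π/2))..(π/2), 1/(A + (-B) * Real.cos θ)^2
      = Gfun A (-B) (π/2) - Gfun A (-B) (-(π/2)) :=
    intervalIntegral.integral_eq_sub_of_hasDerivAt
      (fun x hx => hasDerivAt_Gfun A (-B) hB' x (hIcc x hx)) (hcontB'.intervalIntegrable _ _)
  have e1 : Gfun A B (π/2) = 2*A/((A^2-B^2) * sD) * Real.arctan ((A-B)/sD)
      - B/(A^2-B^2) * (1/A) := by
    unfold Gfun
    rw [show (π/2)/2 = π/4 by ring, Real.tan_pi_div_four, Real.sin_pi_div_two,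
      Real.cos_pi_div_two, mul_one]
    rw [← hsD]
    ring_nf
  have e2 : Gfun A B (-(π/2)) = -(2*A/((A^2-B^2) * sD) * Real.arctan ((A-B)/sD))
      + B/(A^2-B^2) * (1/A) := by
    unfold Gfun
    rw [show (-(π/2))/2 = -(π/4) by ring, Real.tan_neg, Real.tan_pi_div_four,
      Real.sin_neg, Real.sin_pi_div_two, Real.cos_neg, Real.cos_pi_div_two,
      mul_neg_one, Real.arctan_neg]
    rw [← hsD]
    ring_nf
  have e3 : Gfun A (-B) (π/2) = 2*A/((A^2-B^2) * sD) * Real.arctan ((A+B)/sD)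
      + B/(A^2-B^2) * (1/A) := by
    unfold Gfun
    rw [show (π/2)/2 = π/4 by ring, Real.tan_pi_div_four, Real.sin_pi_div_two,
      Real.cos_pi_div_two, mul_one, show A - -B = A + B by ring,
      show A^2 - (-B)^2 = A^2 - B^2 by ring]
    rw [← hsD]
    ring_nf
  have e4 : Gfun A (-B) (-(π/2)) = -(2*A/((A^2-B^2) * sD) * Real.arctan ((A+B)/sD))
      - B/(A^2-B^2) * (1/A) := by
    unfold Gfun
    rw [show (-(π/2))/2 = -(π/4) by ring, Real.tan_neg, Real.tan_pi_div_four,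
      Real.sin_neg, Real.sin_pi_div_two, Real.cos_neg, Real.cos_pi_div_two,
      mul_neg_one, Real.arctan_neg, show A - -B = A + B by ring,
      show A^2 - (-B)^2 = A^2 - B^2 by ring]
    rw [← hsD]
    ring_nf
  have harct : Real.arctan ((A-B)/sD) + Real.arctan ((A+B)/sD) = π/2 := by
    have hx : 0 < (A-B)/sD := by
      apply div_pos _ hsDpos
      cases abs_lt.mp h with
      | intro hl hr => linarith
    have hinv : ((A-B)/sD)⁻¹ = (A+B)/sD := by
      rw [inv_div, div_eq_div_iff (by cases abs_lt.mp h with | intro hl hr => linarith) hsDpos.ne']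
      nlinarith [hsD2]
    have := Real.arctan_inv_of_pos hx
    rw [hinv] at this
    linarith
  rw [h1, h2, h3, hftcB, hftcB', e1, e2, e3, e4]
  have hsDne : sD ≠ 0 := hsDpos.ne'
  linear_combination (4*A/((A^2-B^2)*sD)) * harct

lemma ang_int2 (A b₁ b₂ : ℝ) (h : Real.sqrt (b₁^2+b₂^2) < A) :
    ∫ θ in (-π)..π, 1/(A + b₁ * Real.cos θ + b₂ * Real.sin θ)^2
      = 2*π*A/((A^2-b₁^2-b₂^2) * Real.sqrt (A^2-b₁^2-b₂^2)) := by
  have hA : 0 < A := (Real.sqrt_nonneg _).trans_lt h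
  set B := Real.sqrt (b₁^2+b₂^2) with hB
  have hB2 : B^2 = b₁^2 + b₂^2 := Real.sq_sqrt (by positivity)
  have hBA : |B| < A := by rwa [abs_of_nonneg (Real.sqrt_nonneg _)]
  have hDeq : A^2 - b₁^2 - b₂^2 = A^2 - B^2 := by rw [hB2]; ring
  rcases eq_or_lt_of_le (Real.sqrt_nonneg (b₁^2+b₂^2)) with hB0 | hBpos
  · -- B = 0
    have hb1 : b₁ = 0 ∧ b₂ = 0 := by
      constructor <;> nlinarith [hB2]
    obtain ⟨hb1, hb2⟩ := hb1
    subst hb1; subst hb2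
    simp only [zero_mul, add_zero]
    rw [intervalIntegral.integral_const]
    rw [show A^2 - 0^2 - 0^2 = A^2 by ring, Real.sqrt_sq hA.le, smul_eq_mul]
    field_simp
    ring
  · -- B > 0
    obtain ⟨φ, hcos, hsin⟩ : ∃ φ, Real.cos φ = b₁ / B ∧ Real.sin φ = b₂ / B := by
      have hz : (⟨b₁, b₂⟩ : ℂ) ≠ 0 := by
        intro hzz
        rw [Complex.ext_iff] at hzz
        simp at hzz
        obtain ⟨h1, h2⟩ := hzz
        rw [h1, h2] at hBpos
        norm_num at hBpos
      have habs : ‖(⟨b₁, b₂⟩ : ℂ)‖ = B := by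
        rw [Complex.norm_def, Complex.normSq_mk]; rw [hB]; ring_nf
      exact ⟨Complex.arg ⟨b₁, b₂⟩, by rw [Complex.cos_arg hz, habs], by rw [Complex.sin_arg, habs]⟩
    have hpt : ∀ θ : ℝ, A + b₁ * Real.cos θ + b₂ * Real.sin θ = A + B * Real.cos (θ - φ) := by
      intro θ
      rw [Real.cos_sub, hcos, hsin]
      have hBne : B ≠ 0 := hBpos.ne'
      field_simp
      ring
    calc ∫ θ in (-π)..π, 1/(A + b₁ * Real.cos θ + b₂ * Real.sin θ)^2
        = ∫ θ in (-π)..π, 1/(A + B * Real.cos (θ - φ))^2 := by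
          apply intervalIntegral.integral_congr
          intro x _
          show 1/(A + b₁ * Real.cos x + b₂ * Real.sin x)^2 = 1/(A + B * Real.cos (x - φ))^2
          rw [hpt]
      _ = ∫ θ in (-π - φ)..(π - φ), 1/(A + B * Real.cos θ)^2 := by
          exact intervalIntegral.integral_comp_sub_right (fun θ => 1/(A + B * Real.cos θ)^2) φ
      _ = ∫ θ in (-π)..π, 1/(A + B * Real.cos θ)^2 := by
          have hper : Function.Periodic (fun θ : ℝ => 1/(A + B * Real.cos θ)^2) (2*π) := by
            intro x; simp [Real.cos_add_two_pi]
          have := hper.intervalIntegral_add_eq (-π - φ) (-π)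
          rw [show -π - φ + 2*π = π - φ by ring, show -π + 2*π = π by ring] at this
          exact this
      _ = 2*π*A/((A^2-B^2) * Real.sqrt (A^2-B^2)) := ang_int A B hBA
      _ = 2*π*A/((A^2-b₁^2-b₂^2) * Real.sqrt (A^2-b₁^2-b₂^2)) := by rw [hDeq]

noncomputable def Ffun (a c ρ : ℝ) : ℝ :=
  2*π*(1 + (ρ^2 - c^2 - a^2)/Real.sqrt ((a^2 + (ρ - c)^2) * (a^2 + (ρ + c)^2)))

lemma hasDerivAt_Ffun (a c : ℝ) (ha : 0 < a) (ρ : ℝ) :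
    HasDerivAt (Ffun a c)
      (2*π * (4*a^2*ρ*(ρ^2+c^2+a^2) /
        (((a^2+(ρ-c)^2)*(a^2+(ρ+c)^2)) * Real.sqrt ((a^2+(ρ-c)^2)*(a^2+(ρ+c)^2))))) ρ := by
  have hupos : 0 < (a^2+(ρ-c)^2)*(a^2+(ρ+c)^2) := by positivity
  set S := Real.sqrt ((a^2+(ρ-c)^2)*(a^2+(ρ+c)^2)) with hS
  have hS2 : S^2 = (a^2+(ρ-c)^2)*(a^2+(ρ+c)^2) := Real.sq_sqrt hupos.le
  have hSpos : 0 < S := Real.sqrt_pos.mpr hupos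
  have h1 : HasDerivAt (fun ρ : ℝ => a^2 + (ρ - c)^2) (2*(ρ-c)) ρ := by
    have := (((hasDerivAt_id ρ).sub_const c).pow 2).const_add (a^2)
    simpa using this
  have h2 : HasDerivAt (fun ρ : ℝ => a^2 + (ρ + c)^2) (2*(ρ+c)) ρ := by
    have := (((hasDerivAt_id ρ).add_const c).pow 2).const_add (a^2)
    simpa using this
  have hu : HasDerivAt (fun ρ : ℝ => (a^2+(ρ-c)^2)*(a^2+(ρ+c)^2))
      (2*(ρ-c)*(a^2+(ρ+c)^2) + (a^2+(ρ-c)^2)*(2*(ρ+c))) ρ := h1.mul h2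
  have hsqrt : HasDerivAt (fun ρ : ℝ => Real.sqrt ((a^2+(ρ-c)^2)*(a^2+(ρ+c)^2)))
      ((2*(ρ-c)*(a^2+(ρ+c)^2) + (a^2+(ρ-c)^2)*(2*(ρ+c))) / (2*S)) ρ :=
    hu.sqrt hupos.ne'
  have hN : HasDerivAt (fun ρ : ℝ => ρ^2 - c^2 - a^2) (2*ρ) ρ := by
    have := ((hasDerivAt_pow 2 ρ).sub_const (c^2)).sub_const (a^2)
    simpa using this
  have hq : HasDerivAt (fun ρ : ℝ => (ρ^2 - c^2 - a^2) /
      Real.sqrt ((a^2+(ρ-c)^2)*(a^2+(ρ+c)^2)))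
      ((2*ρ * S - (ρ^2 - c^2 - a^2) *
        ((2*(ρ-c)*(a^2+(ρ+c)^2) + (a^2+(ρ-c)^2)*(2*(ρ+c))) / (2*S))) / S^2) ρ :=
    hN.div hsqrt hSpos.ne'
  have hF := (hq.const_add 1).const_mul (2*π)
  refine hF.congr_deriv ?_
  have hkey : (2*ρ * S - (ρ^2 - c^2 - a^2) *
        ((2*(ρ-c)*(a^2+(ρ+c)^2) + (a^2+(ρ-c)^2)*(2*(ρ+c))) / (2*S))) / S^2
      = (2*ρ*S^2 - (ρ^2 - c^2 - a^2) *
        ((2*(ρ-c)*(a^2+(ρ+c)^2) + (a^2+(ρ-c)^2)*(2*(ρ+c))) / 2)) / (S^2 * S) := by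
    rw [div_eq_div_iff (by positivity) (by positivity)]
    field_simp
  rw [hkey, hS2]
  rw [show 2*ρ*((a^2+(ρ-c)^2)*(a^2+(ρ+c)^2)) - (ρ^2 - c^2 - a^2) *
        ((2*(ρ-c)*(a^2+(ρ+c)^2) + (a^2+(ρ-c)^2)*(2*(ρ+c))) / 2)
      = 4*a^2*ρ*(ρ^2+c^2+a^2) by ring]
theorem stmt_6 (a r : ℝ) (z₀ : ℂ) (ha : 0 < a) (hr : 0 < r) :
    ∫ z in Metric.ball z₀ r, 4 * a ^ 2 / (Complex.normSq z + a ^ 2) ^ 2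
      = 2 * π * (1 + (r ^ 2 - Complex.normSq z₀ - a ^ 2) /
          Real.sqrt ((a ^ 2 + (r - ‖z₀‖) ^ 2) *
            (a ^ 2 + (r + ‖z₀‖) ^ 2))) := by
  set c := ‖z₀‖ with hc
  have hc0 : 0 ≤ c := norm_nonneg z₀
  have hc2 : c^2 = z₀.re^2 + z₀.im^2 := by
    rw [hc, Complex.sq_norm, Complex.normSq_apply]; ring
  -- translation
  have step1 : ∫ z in Metric.ball z₀ r, 4 * a ^ 2 / (Complex.normSq z + a ^ 2) ^ 2
      = ∫ w in Metric.ball (0:ℂ) r, 4 * a ^ 2 / (Complex.normSq (z₀ + w) + a ^ 2) ^ 2 := by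
    have h := (measurePreserving_add_left (volume : Measure ℂ) z₀).setIntegral_preimage_emb
      (measurableEmbedding_addLeft z₀)
      (fun z => 4 * a ^ 2 / (Complex.normSq z + a ^ 2) ^ 2) (Metric.ball z₀ r)
    rw [← h]
    congr 1
    ext w
    simp [dist_eq_norm]
  rw [step1]
  -- indicator and polar coordinates
  set f : ℂ → ℝ := (Metric.ball (0:ℂ) r).indicator
    (fun w => 4 * a ^ 2 / (Complex.normSq (z₀ + w) + a ^ 2) ^ 2) with hf
  have step2 : ∫ w in Metric.ball (0:ℂ) r, 4 * a ^ 2 / (Complex.normSq (z₀ + w) + a ^ 2) ^ 2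
      = ∫ p in Set.Ioo (0:ℝ) r ×ˢ Set.Ioo (-π) π,
          p.1 * (4 * a ^ 2 / (Complex.normSq (z₀ +
            (p.1 * (Real.cos p.2 + Real.sin p.2 * Complex.I))) + a ^ 2) ^ 2) := by
    rw [← integral_indicator Metric.isOpen_ball.measurableSet, ← hf,
      ← Complex.integral_comp_polarCoord_symm f]
    rw [show (polarCoord.target : Set (ℝ×ℝ)) = Set.Ioi (0:ℝ) ×ˢ Set.Ioo (-π) π from rfl]
    have hmeas : MeasurableSet (Set.Ioo (0:ℝ) r ×ˢ Set.Ioo (-π) π) :=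
      (measurableSet_Ioo).prod (measurableSet_Ioo)
    have hcongr : Set.EqOn
        (fun p : ℝ × ℝ => p.1 • f (Complex.polarCoord.symm p))
        (fun p : ℝ × ℝ => (Set.Ioo (0:ℝ) r ×ˢ Set.Ioo (-π) π).indicator
          (fun p : ℝ × ℝ => p.1 * (4 * a ^ 2 / (Complex.normSq (z₀ +
            (p.1 * (Real.cos p.2 + Real.sin p.2 * Complex.I))) + a ^ 2) ^ 2)) p)
        (Set.Ioi (0:ℝ) ×ˢ Set.Ioo (-π) π) := by
      intro p hp
      simp only [Set.mem_prod, Set.mem_Ioi] at hp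
      have habs : Complex.polarCoord.symm p ∈ Metric.ball (0:ℂ) r ↔ p.1 < r := by
        rw [Metric.mem_ball, dist_zero_right, Complex.norm_polarCoord_symm,
          abs_of_pos hp.1]
      by_cases hcond : p.1 < r
      · have h1 : Complex.polarCoord.symm p ∈ Metric.ball (0:ℂ) r := habs.mpr hcond
        have h2 : p ∈ Set.Ioo (0:ℝ) r ×ˢ Set.Ioo (-π) π := ⟨⟨hp.1, hcond⟩, hp.2⟩
        simp only [hf]
        rw [Set.indicator_of_mem h2, Set.indicator_of_mem h1,
          Complex.polarCoord_symm_apply, smul_eq_mul]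
      · have h1 : Complex.polarCoord.symm p ∉ Metric.ball (0:ℂ) r :=
          fun hmem => hcond (habs.mp hmem)
        have h2 : p ∉ Set.Ioo (0:ℝ) r ×ˢ Set.Ioo (-π) π := fun hmem => hcond hmem.1.2
        simp only [hf]
        rw [Set.indicator_of_notMem h2, Set.indicator_of_notMem h1, smul_zero]
    rw [setIntegral_congr_fun (measurableSet_Ioi.prod measurableSet_Ioo) hcongr]
    rw [setIntegral_indicator hmeas]
    congr 1
    rw [Set.prod_inter_prod]
    congr 1
    congr 1
    · rw [Set.Ioi_inter_Ioo, max_eq_right le_rfl]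
    · exact Set.inter_self _
  rw [step2]
  -- continuity of the polar integrand
  set F : ℝ × ℝ → ℝ := fun p => p.1 * (4 * a ^ 2 / (Complex.normSq (z₀ +
      (p.1 * (Real.cos p.2 + Real.sin p.2 * Complex.I))) + a ^ 2) ^ 2) with hF
  have hin : Continuous fun p : ℝ × ℝ => (p.1 : ℂ) * (Real.cos p.2 + Real.sin p.2 * Complex.I) := by
    fun_prop
  have hcontF : Continuous F := by
    apply Continuous.mul continuous_fst
    apply Continuous.div continuous_const
    · exact ((Complex.continuous_normSq.comp (continuous_const.add hin)).add
        continuous_const).pow 2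
    · intro x
      have h := Complex.normSq_nonneg (z₀ + (x.1 * (Real.cos x.2 + Real.sin x.2 * Complex.I)))
      positivity
  have hint : IntegrableOn F (Set.Ioo (0:ℝ) r ×ˢ Set.Ioo (-π) π) := by
    apply (hcontF.continuousOn.integrableOn_compact ((isCompact_Icc (a := (0:ℝ)) (b := r)).prod
      (isCompact_Icc (a := -π) (b := π)))).mono_set
    exact Set.prod_mono Set.Ioo_subset_Icc_self Set.Ioo_subset_Icc_self
  rw [show (volume : Measure (ℝ × ℝ)) = (volume : Measure ℝ).prod volume from
    (Measure.volume_eq_prod ℝ ℝ)] at hint ⊢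
  rw [setIntegral_prod F hint]
  -- inner angular integral
  have inner : ∀ ρ ∈ Set.Ioo (0:ℝ) r, (∫ θ in Set.Ioo (-π) π, F (ρ, θ))
      = 2*π * (4*a^2*ρ*(ρ^2+c^2+a^2) /
        (((a^2+(ρ-c)^2)*(a^2+(ρ+c)^2)) * Real.sqrt ((a^2+(ρ-c)^2)*(a^2+(ρ+c)^2)))) := by
    intro ρ hρ
    have hρ0 : 0 < ρ := hρ.1
    have hpt : ∀ θ : ℝ, F (ρ, θ) = ρ * (4*a^2) *
        (1/((ρ^2+c^2+a^2) + (2*ρ*z₀.re) * Real.cos θ + (2*ρ*z₀.im) * Real.sin θ)^2) := by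
      intro θ
      have hns : Complex.normSq (z₀ + ((ρ:ℂ) * (Real.cos θ + Real.sin θ * Complex.I)))
          = ρ^2 + c^2 + (2*ρ*z₀.re) * Real.cos θ + (2*ρ*z₀.im) * Real.sin θ := by
        simp only [Complex.normSq_apply, Complex.add_re, Complex.add_im, Complex.mul_re,
          Complex.mul_im, Complex.ofReal_re, Complex.ofReal_im, Complex.I_re, Complex.I_im,
          Complex.add_re, Complex.add_im]
        ring_nf
        nlinarith [Real.sin_sq_add_cos_sq θ, hc2]
      simp only [hF]
      rw [hns]
      ring
    have hA : 0 < ρ^2+c^2+a^2 := by positivity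
    have hball : Real.sqrt ((2*ρ*z₀.re)^2 + (2*ρ*z₀.im)^2) < ρ^2+c^2+a^2 := by
      have h1 : (2*ρ*z₀.re)^2 + (2*ρ*z₀.im)^2 = (2*ρ*c)^2 := by
        linear_combination (-4*ρ^2) * hc2
      rw [h1, Real.sqrt_sq (by positivity)]
      nlinarith [sq_nonneg (ρ - c), ha]
    rw [← integral_Ioc_eq_integral_Ioo,
      ← intervalIntegral.integral_of_le (by linarith [Real.pi_pos] : -π ≤ π)]
    rw [intervalIntegral.integral_congr (fun θ _ => hpt θ)]
    rw [intervalIntegral.integral_const_mul]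
    rw [ang_int2 (ρ^2+c^2+a^2) (2*ρ*z₀.re) (2*ρ*z₀.im) hball]
    rw [show (ρ^2+c^2+a^2)^2 - (2*ρ*z₀.re)^2 - (2*ρ*z₀.im)^2
        = (a^2+(ρ-c)^2)*(a^2+(ρ+c)^2) from by linear_combination (4*ρ^2) * hc2]
    ring
  rw [setIntegral_congr_fun measurableSet_Ioo inner]
  -- radial integral via FTC
  rw [← integral_Ioc_eq_integral_Ioo, ← intervalIntegral.integral_of_le hr.le]
  have hcontR : Continuous fun ρ : ℝ => 2*π * (4*a^2*ρ*(ρ^2+c^2+a^2) /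
      (((a^2+(ρ-c)^2)*(a^2+(ρ+c)^2)) * Real.sqrt ((a^2+(ρ-c)^2)*(a^2+(ρ+c)^2)))) := by
    apply Continuous.mul continuous_const
    apply Continuous.div (by fun_prop)
    · exact (by fun_prop : Continuous fun ρ : ℝ => (a^2+(ρ-c)^2)*(a^2+(ρ+c)^2)).mul
        (Real.continuous_sqrt.comp (by fun_prop))
    · intro x
      have h1 : 0 < (a^2+(x-c)^2)*(a^2+(x+c)^2) := by positivity
      have h2 : 0 < Real.sqrt ((a^2+(x-c)^2)*(a^2+(x+c)^2)) := Real.sqrt_pos.mpr h1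
      positivity
  rw [intervalIntegral.integral_eq_sub_of_hasDerivAt
    (fun x _ => hasDerivAt_Ffun a c ha x) (hcontR.intervalIntegrable 0 r)]
  have hF0 : Ffun a c 0 = 0 := by
    unfold Ffun
    rw [show (a^2 + ((0:ℝ) - c)^2) * (a^2 + ((0:ℝ) + c)^2) = (a^2+c^2)*(a^2+c^2) by ring]
    rw [Real.sqrt_mul_self (by positivity)]
    field_simp
    ring
  rw [hF0, sub_zero]
  unfold Ffun
  rw [← Complex.sq_norm z₀, ← hc]
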